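/- Let m be a natural number and let A be a 3×m matrix with nonnegative integer entries such that A * Aᵀ = [[2,2,1],[2,2,1],[1,1,2]]. Then there exist three distinct column indices j₀, j₁, j₂ such that the j₀-th column of A is (1,1,1), the j₁-th column is (1,1,0), the j₂-th column is (0,0,1), and every other column of A is zero. -/

import Mathlib

open Matrix

/-- If `A` is a `3 × m` matrix with nonnegative integer entries satisfying
`A * Aᵀ = [[2,2,1],[2,2,1],[1,1,2]]` (the reduced fusion matrix of `1 + ν` in the Haagerup
fusion ring `H₄`), then there are three distinct column indices `j₀, j₁, j₂` such that the
`j₀`-th column of `A` is `(1,1,1)`, the `j₁`-th column is `(1,1,0)`, the `j₂`-th column is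
`(0,0,1)`, and every other column of `A` is zero. -/
theorem stmt_1 (m : ℕ) (A : Matrix (Fin 3) (Fin m) ℤ)
    (hA : ∀ i j, 0 ≤ A i j)
    (h : A * Aᵀ = !![(2 : ℤ), 2, 1; 2, 2, 1; 1, 1, 2]) :
    ∃ j₀ j₁ j₂ : Fin m, j₀ ≠ j₁ ∧ j₀ ≠ j₂ ∧ j₁ ≠ j₂ ∧
      (A 0 j₀ = 1 ∧ A 1 j₀ = 1 ∧ A 2 j₀ = 1) ∧
      (A 0 j₁ = 1 ∧ A 1 j₁ = 1 ∧ A 2 j₁ = 0) ∧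
      (A 0 j₂ = 0 ∧ A 1 j₂ = 0 ∧ A 2 j₂ = 1) ∧
      (∀ j, j ≠ j₀ → j ≠ j₁ → j ≠ j₂ → ∀ i, A i j = 0) := by
  have hsum : ∀ i k, ∑ j, A i j * A k j = (!![(2 : ℤ), 2, 1; 2, 2, 1; 1, 1, 2]) i k := by
    intro i k
    have := congrFun (congrFun h i) k
    simpa [Matrix.mul_apply, Matrix.transpose_apply] using this
  have h01 : ∀ i j, A i j = 0 ∨ A i j = 1 := by
    intro i j
    have h2 : A i j * A i j ≤ 2 := by
      have hle : A i j * A i j ≤ ∑ j', A i j' * A i j' :=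
        Finset.single_le_sum (fun j' _ => mul_nonneg (hA i j') (hA i j')) (Finset.mem_univ j)
      have hd : (!![(2 : ℤ), 2, 1; 2, 2, 1; 1, 1, 2]) i i = 2 := by fin_cases i <;> norm_num
      rw [hsum i i, hd] at hle; exact hle
    have h0 := hA i j
    have h1 : A i j ≤ 1 := by nlinarith
    omega
  classical
  set s : Fin 3 → Finset (Fin m) := fun i => Finset.univ.filter (fun j => A i j = 1) with hs
  have hmem : ∀ i j, j ∈ s i ↔ A i j = 1 := by
    intro i j; simp [hs]
  have hnot : ∀ i j, j ∉ s i → A i j = 0 := by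
    intro i j hj
    rcases h01 i j with h' | h'
    · exact h'
    · exact absurd ((hmem i j).mpr h') hj
  have hcard : ∀ i k, ((s i ∩ s k).card : ℤ) = (!![(2 : ℤ), 2, 1; 2, 2, 1; 1, 1, 2]) i k := by
    intro i k
    rw [← hsum i k]
    have : ∀ j, A i j * A k j = (if j ∈ s i ∩ s k then (1:ℤ) else 0) := by
      intro j
      rcases h01 i j with h1 | h1 <;> rcases h01 k j with h2 | h2 <;>
        simp [h1, h2, hmem, Finset.mem_inter]
    rw [Finset.sum_congr rfl (fun j _ => this j)]
    rw [Finset.sum_ite_mem, Finset.univ_inter]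
    simp
  have hc00 : (s 0).card = 2 := by
    have := hcard 0 0; norm_num at this; exact_mod_cast this
  have hc11 : (s 1).card = 2 := by
    have := hcard 1 1; norm_num at this; exact_mod_cast this
  have hc22 : (s 2).card = 2 := by
    have := hcard 2 2; simp [Matrix.cons_val] at this; exact_mod_cast this
  have hc01 : (s 0 ∩ s 1).card = 2 := by
    have := hcard 0 1; norm_num at this; exact_mod_cast this
  have hc02 : (s 0 ∩ s 2).card = 1 := by
    have := hcard 0 2; simp [Matrix.cons_val] at this; exact_mod_cast this
  have hc12 : (s 1 ∩ s 2).card = 1 := by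
    have := hcard 1 2; simp [Matrix.cons_val] at this; exact_mod_cast this
  -- s 0 = s 1
  have hs01 : s 0 = s 1 := by
    have h1 : s 0 ∩ s 1 = s 0 :=
      Finset.eq_of_subset_of_card_le (Finset.inter_subset_left) (by omega)
    have h2 : s 0 ∩ s 1 = s 1 :=
      Finset.eq_of_subset_of_card_le (Finset.inter_subset_right) (by omega)
    rw [← h1, h2]
  obtain ⟨j₀, hj0⟩ := Finset.card_eq_one.mp hc02
  have hj00 : j₀ ∈ s 0 ∧ j₀ ∈ s 2 := by
    have : j₀ ∈ s 0 ∩ s 2 := by rw [hj0]; simp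
    simpa [Finset.mem_inter] using this
  obtain ⟨j₁, hj1s, hj1ne⟩ : ∃ j₁ ∈ s 0, j₁ ≠ j₀ := by
    by_contra hcon
    push_neg at hcon
    have : s 0 ⊆ {j₀} := fun x hx => Finset.mem_singleton.mpr (hcon x hx)
    have := Finset.card_le_card this
    simp at this; omega
  obtain ⟨j₂, hj2s, hj2ne⟩ : ∃ j₂ ∈ s 2, j₂ ≠ j₀ := by
    by_contra hcon
    push_neg at hcon
    have : s 2 ⊆ {j₀} := fun x hx => Finset.mem_singleton.mpr (hcon x hx)
    have := Finset.card_le_card this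
    simp at this; omega
  have hs0eq : s 0 = {j₀, j₁} := by
    refine (Finset.eq_of_subset_of_card_le ?_ ?_).symm
    · intro x hx
      simp only [Finset.mem_insert, Finset.mem_singleton] at hx
      rcases hx with hx | hx
      · subst hx; exact hj00.1
      · subst hx; exact hj1s
    · rw [hc00, Finset.card_pair (fun he => hj1ne he.symm)]
  have hs2eq : s 2 = {j₀, j₂} := by
    refine (Finset.eq_of_subset_of_card_le ?_ ?_).symm
    · intro x hx
      simp only [Finset.mem_insert, Finset.mem_singleton] at hx
      rcases hx with hx | hx
      · subst hx; exact hj00.2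
      · subst hx; exact hj2s
    · rw [hc22, Finset.card_pair (fun he => hj2ne he.symm)]
  have hj1not2 : j₁ ∉ s 2 := by
    intro hx
    have : j₁ ∈ s 0 ∩ s 2 := Finset.mem_inter.mpr ⟨hj1s, hx⟩
    rw [hj0] at this; simp at this; exact hj1ne this
  have hj2not0 : j₂ ∉ s 0 := by
    intro hx
    have : j₂ ∈ s 0 ∩ s 2 := Finset.mem_inter.mpr ⟨hx, hj2s⟩
    rw [hj0] at this; simp at this; exact hj2ne this
  have hj12 : j₁ ≠ j₂ := fun he => hj2not0 (he ▸ hj1s)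
  refine ⟨j₀, j₁, j₂, fun he => hj1ne he.symm, fun he => hj2ne he.symm, hj12, ?_, ?_, ?_, ?_⟩
  · exact ⟨(hmem 0 j₀).mp hj00.1, (hmem 1 j₀).mp (hs01 ▸ hj00.1), (hmem 2 j₀).mp hj00.2⟩
  · exact ⟨(hmem 0 j₁).mp hj1s, (hmem 1 j₁).mp (hs01 ▸ hj1s), hnot 2 j₁ hj1not2⟩
  · exact ⟨hnot 0 j₂ hj2not0, hnot 1 j₂ (hs01 ▸ hj2not0), (hmem 2 j₂).mp hj2s⟩
  · intro j hj0' hj1' hj2' i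
    have hns0 : j ∉ s 0 := by rw [hs0eq]; simp [hj0', hj1']
    have hns2 : j ∉ s 2 := by rw [hs2eq]; simp [hj0', hj2']
    fin_cases i
    · exact hnot 0 j hns0
    · exact hnot 1 j (hs01 ▸ hns0)
    · exact hnot 2 j hns2
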